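/- Let B be a binomial random variable with parameters n ∈ ℕ and p ∈ (0,1). Then for every real k with k > np, P(B ≥ k) ≤ exp( k·(1 + log(np/k) - np/k) ). -/

import Mathlib

theorem binomial_upper_tail_chernoff (n : ℕ) (p : ℝ) (hp0 : 0 < p) (hp1 : p < 1)
    (k : ℝ) (hk : (n : ℝ) * p < k) :
    (∑ i ∈ Finset.range (n + 1),
        if k ≤ (i : ℝ) then (n.choose i : ℝ) * p ^ i * (1 - p) ^ (n - i) else 0)
      ≤ Real.exp (k * (1 + Real.log ((n : ℝ) * p / k) - (n : ℝ) * p / k)) := by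
  rcases Nat.eq_zero_or_pos n with hn | hn
  · subst hn
    simp only [Nat.cast_zero, zero_mul] at hk ⊢
    rw [Finset.sum_range_one, if_neg (by push_cast; linarith)]
    positivity
  · have hμ : 0 < (n : ℝ) * p := mul_pos (by exact_mod_cast hn) hp0
    set μ : ℝ := (n : ℝ) * p with hμdef
    have hk0 : 0 < k := hμ.trans hk
    set t : ℝ := Real.log (k / μ) with htdef
    have ht : 0 < t := Real.log_pos ((one_lt_div hμ).mpr hk)
    have het : Real.exp t = k / μ := Real.exp_log (div_pos hk0 hμ)
    have h1p : (0:ℝ) ≤ 1 - p := by linarith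
    have hterm : ∀ i ∈ Finset.range (n+1),
        (if k ≤ (i : ℝ) then (n.choose i : ℝ) * p ^ i * (1 - p) ^ (n - i) else 0)
        ≤ Real.exp (t * ((i:ℝ) - k)) * ((n.choose i : ℝ) * p ^ i * (1 - p) ^ (n - i)) := by
      intro i _
      have hpos : (0:ℝ) ≤ (n.choose i : ℝ) * p ^ i * (1 - p) ^ (n - i) := by positivity
      split_ifs with h
      · nlinarith [Real.one_le_exp (mul_nonneg ht.le (by linarith : (0:ℝ) ≤ (i:ℝ) - k))]
      · positivity
    have hrw : ∑ i ∈ Finset.range (n+1),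
          Real.exp (t * ((i:ℝ) - k)) * ((n.choose i : ℝ) * p ^ i * (1 - p) ^ (n - i))
        = Real.exp (-(t*k)) * ((p * Real.exp t + (1-p)) ^ n) := by
      rw [add_pow, Finset.mul_sum]
      refine Finset.sum_congr rfl fun i _ => ?_
      rw [show t * ((i:ℝ) - k) = (i:ℝ)*t + (-(t*k)) by ring, Real.exp_add,
        Real.exp_nat_mul, mul_pow]
      ring
    have hbase : p * Real.exp t + (1-p) ≤ Real.exp (p * (Real.exp t - 1)) := by
      have := Real.add_one_le_exp (p * (Real.exp t - 1))
      linarith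
    have hbase0 : (0:ℝ) ≤ p * Real.exp t + (1-p) := by positivity
    have hpow : (p * Real.exp t + (1-p)) ^ n ≤ Real.exp ((n:ℝ) * (p * (Real.exp t - 1))) := by
      calc (p * Real.exp t + (1-p)) ^ n ≤ (Real.exp (p * (Real.exp t - 1))) ^ n :=
            pow_le_pow_left₀ hbase0 hbase n
        _ = Real.exp ((n:ℝ) * (p * (Real.exp t - 1))) := (Real.exp_nat_mul _ n).symm
    have hfinal : Real.exp (-(t*k)) * Real.exp ((n:ℝ) * (p * (Real.exp t - 1)))
        = Real.exp (k * (1 + Real.log (μ / k) - μ / k)) := by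
      rw [← Real.exp_add]
      congr 1
      have h1 : (n:ℝ) * (p * (Real.exp t - 1)) = μ * (k/μ - 1) := by
        rw [het, hμdef]; ring
      have h2 : μ * (k/μ - 1) = k - μ := by field_simp
      have h3 : t = -Real.log (μ / k) := by
        rw [htdef, ← Real.log_inv]
        congr 1
        field_simp
      have h4 : k * (μ / k) = μ := by field_simp
      rw [h1, h2, h3]
      nlinarith [h4]
    calc (∑ i ∈ Finset.range (n + 1),
          if k ≤ (i : ℝ) then (n.choose i : ℝ) * p ^ i * (1 - p) ^ (n - i) else 0)
        ≤ ∑ i ∈ Finset.range (n+1),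
          Real.exp (t * ((i:ℝ) - k)) * ((n.choose i : ℝ) * p ^ i * (1 - p) ^ (n - i)) :=
          Finset.sum_le_sum hterm
      _ = Real.exp (-(t*k)) * ((p * Real.exp t + (1-p)) ^ n) := hrw
      _ ≤ Real.exp (-(t*k)) * Real.exp ((n:ℝ) * (p * (Real.exp t - 1))) := by
          exact mul_le_mul_of_nonneg_left hpow (Real.exp_pos _).le
      _ = Real.exp (k * (1 + Real.log (μ / k) - μ / k)) := hfinal
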